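/- For odd m with 1 ≤ m ≤ 2n+1, the number of maximal pairwise anticommuting subsets of (𝔽₂)^{2n} of cardinality m equals (1/m!) ∏_{k=0}^{m−2} s(k), where s(k) = 4^n/2^k if k is odd and 4^n/2^k − 1 if k is even; for even m or m > 2n+1 the number is 0. -/

import Mathlib

/-- The phase space `(𝔽₂)^{2n}`, modeled as pairs of vectors in `𝔽₂ⁿ`. -/
abbrev V (n : ℕ) := (Fin n → ZMod 2) × (Fin n → ZMod 2)

/-- The standard symplectic bilinear form `ω((a,b),(c,d)) = a·d + b·c`. -/
def sympl {n : ℕ} (P Q : V n) : ZMod 2 :=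
  ∑ i, (P.1 i * Q.2 i + P.2 i * Q.1 i)

/-- A finite set is (pairwise) anticommuting if `ω(P,Q) = 1` for all distinct `P, Q`. -/
def AC {n : ℕ} (G : Finset (V n)) : Prop :=
  ∀ P ∈ G, ∀ Q ∈ G, P ≠ Q → sympl P Q = 1

/-- A maximal pairwise anticommuting set: no strictly larger set is anticommuting. -/
def MaxAC {n : ℕ} (G : Finset (V n)) : Prop :=
  AC G ∧ ∀ H : Finset (V n), G ⊆ H → AC H → H = G

/-- `s(k) = 4^n/2^k` if `k` is odd, and `4^n/2^k - 1` if `k` is even. -/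
noncomputable def s (n k : ℕ) : ℚ :=
  if Odd k then (4 : ℚ) ^ n / 2 ^ k else (4 : ℚ) ^ n / 2 ^ k - 1

open Finset Function

variable {n : ℕ}

def ACt {n j : ℕ} (t : Fin j → V n) : Prop := ∀ i i', i ≠ i' → sympl (t i) (t i') = 1

def Good {n j : ℕ} (t : Fin j → V n) : Prop := ACt t ∧ LinearIndependent (ZMod 2) t

def sN (n k : ℕ) : ℕ := if Odd k then 2 ^ (2 * n - k) else 2 ^ (2 * n - k) - 1


lemma sympl_self (P : V n) : sympl P P = 0 := by
  unfold sympl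
  rw [Finset.sum_eq_zero]
  intro i _
  rw [mul_comm]
  exact CharTwo.add_self_eq_zero _

lemma sympl_comm (P Q : V n) : sympl P Q = sympl Q P := by
  unfold sympl; apply Finset.sum_congr rfl; intros; ring

lemma sympl_add_left (P P' Q : V n) : sympl (P + P') Q = sympl P Q + sympl P' Q := by
  unfold sympl; rw [← Finset.sum_add_distrib]; apply Finset.sum_congr rfl; intro i _
  simp only [Prod.fst_add, Prod.snd_add, Pi.add_apply]; ring

lemma sympl_smul_left (c : ZMod 2) (P Q : V n) : sympl (c • P) Q = c * sympl P Q := by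
  unfold sympl; rw [Finset.mul_sum]; apply Finset.sum_congr rfl; intro i _
  simp only [Prod.smul_fst, Prod.smul_snd, Pi.smul_apply, smul_eq_mul]; ring

def B (n : ℕ) : V n →ₗ[ZMod 2] V n →ₗ[ZMod 2] ZMod 2 :=
  LinearMap.mk₂ (ZMod 2) sympl sympl_add_left sympl_smul_left
    (fun P Q Q' => by rw [sympl_comm, sympl_add_left, sympl_comm Q, sympl_comm Q'])
    (fun c P Q => by rw [sympl_comm, sympl_smul_left, sympl_comm, smul_eq_mul])

lemma sympl_nondeg {P : V n} (h : ∀ Q, sympl P Q = 0) : P = 0 := by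
  have h1 : P.1 = 0 := by
    funext j
    have := h (0, Pi.single j 1)
    simpa [sympl, Pi.single_apply, mul_ite] using this
  have h2 : P.2 = 0 := by
    funext j
    have := h (Pi.single j 1, 0)
    simpa [sympl, Pi.single_apply, mul_ite] using this
  exact Prod.ext h1 h2

lemma B_apply (n : ℕ) (P Q : V n) : B n P Q = sympl P Q := rfl

lemma sympl_zero_left (Q : V n) : sympl 0 Q = 0 := by simp [sympl]

lemma sympl_sum_left {ι : Type*} (s : Finset ι) (f : ι → V n) (Q : V n) :
    sympl (∑ i ∈ s, f i) Q = ∑ i ∈ s, sympl (f i) Q := by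
  induction s using Finset.cons_induction with
  | empty => simp [sympl_zero_left]
  | cons a s ha ih => rw [Finset.sum_cons, Finset.sum_cons, sympl_add_left, ih]

lemma sympl_sum_right {ι : Type*} (s : Finset ι) (f : ι → V n) (Q : V n) :
    sympl Q (∑ i ∈ s, f i) = ∑ i ∈ s, sympl Q (f i) := by
  rw [sympl_comm, sympl_sum_left]
  exact Finset.sum_congr rfl fun i _ => sympl_comm _ _

lemma surj_pi {ι : Type} [Fintype ι] [DecidableEq ι] (P : ι → V n)
    (h : LinearIndependent (ZMod 2) P) :
    Surjective (LinearMap.pi (fun i => B n (P i)) : V n →ₗ[ZMod 2] (ι → ZMod 2)) := by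
  set F := (LinearMap.pi (fun i => B n (P i)) : V n →ₗ[ZMod 2] (ι → ZMod 2)) with hF
  by_contra hs
  rw [← LinearMap.range_eq_top] at hs
  obtain ⟨φ, φ0, hker⟩ := (LinearMap.range F).exists_le_ker_of_lt_top (lt_top_iff_ne_top.2 hs)
  set c : ι → ZMod 2 := fun i => φ (Pi.single i 1) with hc
  have hφ : ∀ x, φ x = ∑ i, x i * c i := by
    intro x
    have hx : x = ∑ i, x i • Pi.single i (1 : ZMod 2) := by
      funext j
      simp [Pi.single_apply, Finset.sum_apply]
    calc φ x = φ (∑ i, x i • Pi.single i (1 : ZMod 2)) := by rw [← hx]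
    _ = ∑ i, x i • φ (Pi.single i 1) := by rw [map_sum]; exact Finset.sum_congr rfl fun i _ => map_smul φ _ _
    _ = ∑ i, x i * c i := by simp [hc, smul_eq_mul]
  have hzero : (∑ i, c i • P i) = 0 := by
    apply sympl_nondeg
    intro Q
    have hmem : φ (F Q) = 0 := hker (LinearMap.mem_range_self F Q)
    rw [hφ] at hmem
    have hFQ : ∀ i, F Q i = sympl (P i) Q := fun i => B_apply n (P i) Q
    calc sympl (∑ i, c i • P i) Q = ∑ i, sympl (c i • P i) Q := sympl_sum_left _ _ _
    _ = ∑ i, F Q i * c i := by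
        refine Finset.sum_congr rfl fun i _ => ?_
        rw [sympl_smul_left, hFQ, mul_comm]
    _ = 0 := hmem
  have hc0 : ∀ i, c i = 0 := Fintype.linearIndependent_iff.mp h c hzero
  apply φ0
  apply LinearMap.ext
  intro x
  rw [hφ]
  simp [hc0]

lemma card_V : Fintype.card (V n) = 4 ^ n := by
  simp only [Fintype.card_prod, Fintype.card_fun, ZMod.card, Fintype.card_fin]
  rw [← mul_pow]
  norm_num

lemma card_fiber {ι : Type} [Fintype ι] [DecidableEq ι] (P : ι → V n)
    (h : LinearIndependent (ZMod 2) P) (v : ι → ZMod 2) :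
    Nat.card {Q : V n // ∀ i, sympl (P i) Q = v i} * 2 ^ (Fintype.card ι) = 4 ^ n := by
  classical
  set F := (LinearMap.pi (fun i => B n (P i)) : V n →ₗ[ZMod 2] (ι → ZMod 2)) with hFdef
  have hFQ : ∀ (Q : V n) i, F Q i = sympl (P i) Q := fun Q i => B_apply n (P i) Q
  have hsurj := surj_pi P h
  have key : ∀ w, Fintype.card {Q : V n // F Q = w} = Fintype.card {Q : V n // F Q = v} := by
    intro w
    obtain ⟨Qw, hQw⟩ := hsurj w
    obtain ⟨Qv, hQv⟩ := hsurj v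
    apply Fintype.card_congr
    refine ⟨fun Q => ⟨Q.1 - Qw + Qv, by simp [map_add, map_sub, Q.2, hQw, hQv]; rw [show F Qw = w from hQw, show F Qv = v from hQv]; abel⟩,
            fun Q => ⟨Q.1 - Qv + Qw, by simp [map_add, map_sub, Q.2, hQw, hQv]; rw [show F Qw = w from hQw, show F Qv = v from hQv]; abel⟩,
            fun Q => by apply Subtype.ext; simp, fun Q => by apply Subtype.ext; simp⟩
  have e2 : {Q : V n // ∀ i, sympl (P i) Q = v i} ≃ {Q : V n // F Q = v} := by
    apply Equiv.subtypeEquivRight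
    intro Q
    simp only [funext_iff]
    exact forall_congr' fun i => by rw [hFQ]
  have hcards : Fintype.card (V n) = Fintype.card (ι → ZMod 2) * Fintype.card {Q : V n // F Q = v} := by
    rw [← Fintype.card_congr (Equiv.sigmaFiberEquiv F)]
    rw [Fintype.card_sigma]
    rw [Finset.sum_congr rfl (fun w _ => key w)]
    simp [Finset.sum_const, mul_comm]
  rw [Nat.card_congr e2, Nat.card_eq_fintype_card]
  rw [card_V] at hcards
  have : Fintype.card (ι → ZMod 2) = 2 ^ Fintype.card ι := by
    simp [Fintype.card_fun, ZMod.card]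
  rw [this] at hcards
  rw [hcards]
  ring

lemma pair_sum {j : ℕ} {u : Fin j → V n} (hu : ACt u) (c : Fin j → ZMod 2) (i : Fin j) :
    sympl (u i) (∑ i', c i' • u i') = (∑ i', c i') - c i := by
  rw [sympl_sum_right]
  rw [Finset.sum_congr rfl (fun i' _ => by
    rw [sympl_comm, sympl_smul_left, sympl_comm])]
  rw [← Finset.add_sum_erase _ (fun i' => c i' * sympl (u i) (u i')) (Finset.mem_univ i)]
  rw [sympl_self, mul_zero, zero_add]
  rw [Finset.sum_congr rfl (fun i' hi' => by
    rw [hu i i' (Ne.symm (Finset.ne_of_mem_erase hi')), mul_one])]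
  have h := Finset.add_sum_erase Finset.univ c (Finset.mem_univ i)
  rw [eq_sub_iff_add_eq, add_comm]
  exact h

lemma surj_pi' {ι : Type} [Fintype ι] [DecidableEq ι] (P : ι → V n)
    (h : LinearIndependent (ZMod 2) P) (v : ι → ZMod 2) :
    ∃ Q : V n, ∀ i, sympl (P i) Q = v i := by
  obtain ⟨Q, hQ⟩ := surj_pi P h v
  exact ⟨Q, fun i => by rw [← B_apply n (P i) Q]; exact congrFun hQ i⟩


lemma sympl_zero_right (Q : V n) : sympl Q 0 = 0 := by
  rw [sympl_comm]; exact sympl_zero_left Q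

lemma AC_mono {G H : Finset (V n)} (sub : G ⊆ H) (h : AC H) : AC G :=
  fun P hP Q hQ hne => h P (sub hP) Q (sub hQ) hne

lemma zmod2_cases (a : ZMod 2) : a = 0 ∨ a = 1 := by revert a; decide

/-- key computation : pairing an element of an AC set against a subset sum -/
lemma sympl_sum_card {G S : Finset (V n)} (hG : AC G) (hS : S ⊆ G) {P : V n} (hP : P ∈ G) :
    sympl P (∑ Q ∈ S, Q) = ((S.erase P).card : ZMod 2) := by
  rw [sympl_sum_right]
  by_cases hPS : P ∈ S
  · rw [← Finset.add_sum_erase _ _ hPS, sympl_self, zero_add]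
    rw [Finset.sum_congr rfl (fun Q hQ => hG P hP Q (hS (Finset.mem_of_mem_erase hQ))
      (Ne.symm (Finset.ne_of_mem_erase hQ)))]
    simp
  · rw [Finset.erase_eq_of_notMem hPS]
    rw [Finset.sum_congr rfl (fun Q hQ => hG P hP Q (hS hQ) (fun h => hPS (h ▸ hQ)))]
    simp

lemma maxAC_of_sum_zero {G : Finset (V n)} (hG : AC G) (hne : G.Nonempty)
    (hsum : ∑ Q ∈ G, Q = 0) : MaxAC G := by
  obtain ⟨P₀, hP₀⟩ := hne
  have hodd : ((G.erase P₀).card : ZMod 2) = 0 := by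
    rw [← sympl_sum_card hG (Finset.Subset.refl G) hP₀, hsum, sympl_zero_right]
  have hcard : G.card = (G.erase P₀).card + 1 := (Finset.card_erase_add_one hP₀).symm
  have hG1 : (G.card : ZMod 2) = 1 := by
    rw [hcard]; push_cast [hodd]; ring
  refine ⟨hG, fun H sub hH => ?_⟩
  apply Finset.Subset.antisymm _ sub
  intro x hx
  by_contra hxG
  have h1 : sympl x (∑ Q ∈ G, Q) = ((G.erase x).card : ZMod 2) :=
    sympl_sum_card hH (sub.trans (Finset.Subset.refl H)) hx
  rw [hsum, sympl_zero_right, Finset.erase_eq_of_notMem hxG] at h1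
  rw [← h1] at hG1
  exact one_ne_zero hG1.symm

lemma AC_linearIndependent {G : Finset (V n)} (hG : AC G) (hsum : ∑ Q ∈ G, Q ≠ 0) :
    LinearIndependent (ZMod 2) (fun x : {x // x ∈ G} => (x : V n)) := by
  classical
  rw [Fintype.linearIndependent_iff]
  intro g hg
  by_contra hgi
  push_neg at hgi
  obtain ⟨i₀, hi₀⟩ := hgi
  have hi₀1 : g i₀ = 1 := (zmod2_cases (g i₀)).resolve_left hi₀
  set T : Finset {x // x ∈ G} := Finset.univ.filter (fun x => g x = 1) with hT
  set S : Finset (V n) := T.image Subtype.val with hSdef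
  have hSsub : S ⊆ G := by
    intro x hx
    obtain ⟨y, _, rfl⟩ := Finset.mem_image.mp hx
    exact y.2
  have hsum_eq : ∑ x ∈ S, x = ∑ i, g i • (i : V n) := by
    rw [hSdef, Finset.sum_image (fun a _ b _ h => Subtype.ext h)]
    rw [← Finset.sum_filter_add_sum_filter_not Finset.univ (fun x => g x = 1)
      (fun i => g i • (i : V n))]
    have h2 : ∑ i ∈ Finset.univ.filter (fun x => ¬ g x = 1), g i • (i : V n) = 0 := by
      apply Finset.sum_eq_zero
      intro i hi
      have : g i = 0 := (zmod2_cases (g i)).resolve_right (Finset.mem_filter.mp hi).2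
      rw [this, zero_smul]
    rw [h2, add_zero]
    apply Finset.sum_congr rfl
    intro i hi
    rw [(Finset.mem_filter.mp hi).2, one_smul]
  have hS0 : ∑ x ∈ S, x = 0 := by rw [hsum_eq, hg]
  have hmemS : (i₀ : V n) ∈ S :=
    Finset.mem_image.mpr ⟨i₀, Finset.mem_filter.mpr ⟨Finset.mem_univ _, hi₀1⟩, rfl⟩
  -- S ≠ G since sum over G is nonzero
  have hSne : S ≠ G := fun h => hsum (h ▸ hS0)
  obtain ⟨P, hPG, hPS⟩ : ∃ P ∈ G, P ∉ S := by
    by_contra hc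
    push_neg at hc
    exact hSne (Finset.Subset.antisymm hSsub hc)
  have h1 : ((S.erase (i₀ : V n)).card : ZMod 2) = 0 := by
    rw [← sympl_sum_card hG hSsub (hSsub hmemS), hS0, sympl_zero_right]
  have h2 : ((S.erase P).card : ZMod 2) = 0 := by
    rw [← sympl_sum_card hG hSsub hPG, hS0, sympl_zero_right]
  rw [Finset.erase_eq_of_notMem hPS] at h2
  have hcard : S.card = (S.erase (i₀ : V n)).card + 1 := (Finset.card_erase_add_one hmemS).symm
  rw [hcard] at h2
  push_cast [h1] at h2
  simp at h2
lemma maxAC_nonempty_sum_zero {G : Finset (V n)} (h : MaxAC G) :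
    G.Nonempty ∧ ∑ Q ∈ G, Q = 0 := by
  classical
  constructor
  · by_contra hne
    rw [Finset.not_nonempty_iff_eq_empty] at hne
    have hAC0 : AC ({0} : Finset (V n)) := by
      intro P hP Q hQ hne'
      simp only [Finset.mem_singleton] at hP hQ
      exact absurd (hP.trans hQ.symm) hne'
    have := h.2 {0} (hne ▸ Finset.empty_subset _) hAC0
    simp [hne] at this
  · by_contra hsum
    have hli := AC_linearIndependent h.1 hsum
    obtain ⟨Q, hQ⟩ := surj_pi' (fun x : {x // x ∈ G} => (x : V n)) hli (fun _ => 1)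
    have hQG : Q ∉ G := by
      intro hmem
      have := hQ ⟨Q, hmem⟩
      rw [sympl_self] at this
      exact zero_ne_one this
    have hAC : AC (insert Q G) := by
      intro P hP P' hP' hne
      rcases Finset.mem_insert.mp hP with hPQ | hP <;>
        rcases Finset.mem_insert.mp hP' with hPQ' | hP'
      · exact absurd (hPQ.trans hPQ'.symm) hne
      · rw [hPQ, sympl_comm]; exact hQ ⟨P', hP'⟩
      · rw [hPQ']; exact hQ ⟨P, hP⟩
      · exact h.1 P hP P' hP' hne
    have := h.2 _ (Finset.subset_insert Q G) hAC
    rw [Finset.insert_eq_self] at this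
    exact hQG this

lemma maxAC_odd {G : Finset (V n)} (h : MaxAC G) : Odd G.card := by
  obtain ⟨⟨P₀, hP₀⟩, hsum⟩ := maxAC_nonempty_sum_zero h
  have hodd : ((G.erase P₀).card : ZMod 2) = 0 := by
    rw [← sympl_sum_card h.1 (Finset.Subset.refl G) hP₀, hsum, sympl_zero_right]
  have hcard : G.card = (G.erase P₀).card + 1 := (Finset.card_erase_add_one hP₀).symm
  rw [ZMod.natCast_eq_zero_iff] at hodd
  obtain ⟨t, ht⟩ := hodd
  rw [Nat.odd_iff]
  omega

lemma maxAC_card_le {G : Finset (V n)} (h : MaxAC G) : G.card ≤ 2 * n + 1 := by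
  classical
  by_cases hc : G.card ≤ 1
  · omega
  push_neg at hc
  obtain ⟨⟨P₀, hP₀⟩, hsum⟩ := maxAC_nonempty_sum_zero h
  set G' := G.erase P₀ with hG'
  have hsub : G' ⊆ G := Finset.erase_subset _ _
  have hACG' : AC G' := AC_mono hsub h.1
  have h0G : (0 : V n) ∉ G := by
    intro h0
    obtain ⟨Q, hQG, hQne⟩ := Finset.exists_mem_ne hc 0
    have := h.1 0 h0 Q hQG (Ne.symm hQne)
    rw [sympl_zero_left] at this
    exact zero_ne_one this
  have hsumG' : ∑ Q ∈ G', Q = P₀ := by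
    have := Finset.add_sum_erase G id hP₀
    simp only [id] at this
    have h2 : P₀ + ∑ Q ∈ G', Q = 0 := by rw [hG', this, hsum]
    have hx : ∀ x : V n, x + x = 0 := by
      intro x
      have h20 : (2 : ZMod 2) = 0 := rfl
      rw [← two_smul (ZMod 2) x, h20, zero_smul]
    calc ∑ Q ∈ G', Q = P₀ + (P₀ + ∑ Q ∈ G', Q) := by rw [← add_assoc, hx, zero_add]
    _ = P₀ := by rw [h2, add_zero]
  have hP₀ne : P₀ ≠ 0 := fun h' => h0G (h' ▸ hP₀)
  have hli := AC_linearIndependent hACG' (by rw [hsumG']; exact hP₀ne)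
  have hle := hli.fintype_card_le_finrank
  rw [Fintype.card_coe] at hle
  have hrank : Module.finrank (ZMod 2) (V n) = 2 * n := by
    rw [Module.finrank_prod, Module.finrank_pi]
    simp [Fintype.card_fin]; ring
  rw [hrank] at hle
  have : G.card = G'.card + 1 := (Finset.card_erase_add_one hP₀).symm
  omega


/-- pairing one entry against the sum of all entries -/
lemma sympl_sum_univ {j : ℕ} {u : Fin j → V n} (hu : ACt u) (i : Fin j) :
    sympl (u i) (∑ i', u i') = ((j : ZMod 2) - 1) := by
  rw [sympl_sum_right]
  rw [← Finset.add_sum_erase _ _ (Finset.mem_univ i), sympl_self, zero_add]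
  rw [Finset.sum_congr rfl (fun i' hi' => hu i i' (Ne.symm (Finset.ne_of_mem_erase hi')))]
  rw [Finset.sum_const, nsmul_eq_mul, mul_one]
  rw [Finset.card_erase_of_mem (Finset.mem_univ i), Finset.card_univ, Fintype.card_fin]
  have hj : 1 ≤ j := Nat.one_le_iff_ne_zero.mpr (by rintro rfl; exact i.elim0)
  push_cast [Nat.cast_sub hj]
  ring

/-- characterization of solutions inside the span -/
lemma span_char {j : ℕ} {u : Fin j → V n} (hu : ACt u)
    (Q : V n) :
    ((∀ i, sympl (u i) Q = 1) ∧ Q ∈ Submodule.span (ZMod 2) (Set.range u)) ↔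
      (Even j ∧ Q = ∑ i, u i) := by
  constructor
  · rintro ⟨hQ, hspan⟩
    obtain ⟨c, hc⟩ := (Submodule.mem_span_range_iff_exists_fun (ZMod 2)).mp hspan
    set σ := ∑ i, c i with hσdef
    have hkey : ∀ i, sympl (u i) Q = σ - c i := by
      intro i
      rw [← hc, sympl_sum_right]
      rw [Finset.sum_congr rfl (fun i' _ => by
        rw [sympl_comm, sympl_smul_left, sympl_comm])]
      rw [← Finset.add_sum_erase _ (fun i' => c i' * sympl (u i) (u i')) (Finset.mem_univ i)]
      rw [sympl_self, mul_zero, zero_add]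
      rw [Finset.sum_congr rfl (fun i' hi' => by
        rw [hu i i' (Ne.symm (Finset.ne_of_mem_erase hi')), mul_one])]
      have h := Finset.add_sum_erase Finset.univ c (Finset.mem_univ i)
      rw [eq_sub_iff_add_eq, add_comm]
      exact h
    have hci : ∀ i, c i = σ - 1 := by
      intro i
      have h := hQ i
      rw [hkey i] at h
      rw [sub_eq_iff_eq_add] at h
      rw [h]; ring
    have hσeq : σ = (j : ZMod 2) * (σ - 1) := by
      conv_lhs => rw [hσdef, Finset.sum_congr rfl (fun i _ => hci i)]
      rw [Finset.sum_const, Finset.card_univ, Fintype.card_fin, nsmul_eq_mul]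
    rcases zmod2_cases ((j : ZMod 2)) with hj0 | hj1
    · have hdvd : 2 ∣ j := (ZMod.natCast_eq_zero_iff j 2).mp hj0
      have heven : Even j := by obtain ⟨t, ht⟩ := hdvd; exact ⟨t, by omega⟩
      rw [hj0, zero_mul] at hσeq
      have hc1 : ∀ i, c i = 1 := by
        intro i; rw [hci i, hσeq]; decide
      refine ⟨heven, ?_⟩
      rw [← hc]
      exact Finset.sum_congr rfl (fun i _ => by rw [hc1 i, one_smul])
    · exfalso
      rw [hj1, one_mul] at hσeq
      have h2 : (1 : ZMod 2) = σ - (σ - 1) := by ring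
      rw [← hσeq, sub_self] at h2
      exact one_ne_zero h2
  · rintro ⟨hj, rfl⟩
    refine ⟨fun i => ?_, Submodule.sum_mem _ (fun i _ => Submodule.subset_span ⟨i, rfl⟩)⟩
    rw [sympl_sum_univ hu i]
    obtain ⟨r, hr⟩ := hj
    have : (j : ZMod 2) = 0 := by
      rw [ZMod.natCast_eq_zero_iff]; omega
    rw [this]; decide

lemma j_le_2n {j : ℕ} {u : Fin j → V n} (hli : LinearIndependent (ZMod 2) u) : j ≤ 2 * n := by
  have hle := hli.fintype_card_le_finrank
  have hrank : Module.finrank (ZMod 2) (V n) = 2 * n := by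
    rw [Module.finrank_prod, Module.finrank_pi]
    simp [Fintype.card_fin]; ring
  rw [Fintype.card_fin, hrank] at hle
  exact hle

lemma fiber_count {j : ℕ} (u : Fin j → V n) (hu : ACt u)
    (hli : LinearIndependent (ZMod 2) u) :
    Nat.card {Q : V n // (∀ i, sympl (u i) Q = 1) ∧
      Q ∉ Submodule.span (ZMod 2) (Set.range u)} = sN n j := by
  classical
  have hj2n : j ≤ 2 * n := j_le_2n hli
  -- total number of solutions
  have htot : Nat.card {Q : V n // ∀ i, sympl (u i) Q = 1} = 2 ^ (2 * n - j) := by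
    have h := card_fiber u hli (fun _ => 1)
    rw [Fintype.card_fin] at h
    have h4 : (4 : ℕ) ^ n = 2 ^ (2 * n - j) * 2 ^ j := by
      rw [← pow_add]
      have : 2 * n - j + j = 2 * n := by omega
      rw [this]
      have : (4 : ℕ) = 2 ^ 2 := by norm_num
      rw [this, ← pow_mul]
    rw [h4] at h
    exact Nat.eq_of_mul_eq_mul_right (by positivity) h
  -- split into span and non-span parts
  have hsplit : Nat.card {Q : V n // ∀ i, sympl (u i) Q = 1} =
      Nat.card {Q : V n // (∀ i, sympl (u i) Q = 1) ∧ Q ∈ Submodule.span (ZMod 2) (Set.range u)}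
      + Nat.card {Q : V n // (∀ i, sympl (u i) Q = 1) ∧
          Q ∉ Submodule.span (ZMod 2) (Set.range u)} := by
    rw [← Nat.card_sum]
    apply Nat.card_congr
    exact (Equiv.sumCompl
      (fun x : {Q : V n // ∀ i, sympl (u i) Q = 1} =>
        (x : V n) ∈ Submodule.span (ZMod 2) (Set.range u))).symm.trans
      (Equiv.sumCongr
        (Equiv.subtypeSubtypeEquivSubtypeInter _ _)
        (Equiv.subtypeSubtypeEquivSubtypeInter (fun Q : V n => ∀ i, sympl (u i) Q = 1)
          (fun Q => Q ∉ Submodule.span (ZMod 2) (Set.range u))))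
  -- count of span part
  have hspan : Nat.card {Q : V n // (∀ i, sympl (u i) Q = 1) ∧
      Q ∈ Submodule.span (ZMod 2) (Set.range u)} = if Even j then 1 else 0 := by
    by_cases hev : Even j
    · rw [if_pos hev]
      have e : {Q : V n // (∀ i, sympl (u i) Q = 1) ∧
          Q ∈ Submodule.span (ZMod 2) (Set.range u)} ≃ {Q : V n // Q = ∑ i, u i} :=
        Equiv.subtypeEquivRight (fun Q => by
          rw [span_char hu Q]
          exact ⟨fun h => h.2, fun h => ⟨hev, h⟩⟩)
      rw [Nat.card_congr e]
      haveI : Unique {Q : V n // Q = ∑ i, u i} :=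
        ⟨⟨⟨∑ i, u i, rfl⟩⟩, fun b => Subtype.ext b.2⟩
      exact Nat.card_unique
    · rw [if_neg hev]
      haveI : IsEmpty {Q : V n // (∀ i, sympl (u i) Q = 1) ∧
          Q ∈ Submodule.span (ZMod 2) (Set.range u)} := by
        refine ⟨fun x => ?_⟩
        have := (span_char hu x.1).mp x.2
        exact hev this.1
      exact Nat.card_of_isEmpty
  rw [htot, hspan] at hsplit
  unfold sN
  rcases Nat.even_or_odd j with hev | hodd
  · have hno : ¬ Odd j := by rw [Nat.odd_iff]; rw [Nat.even_iff] at hev; omega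
    rw [if_pos hev] at hsplit
    rw [if_neg hno]
    omega
  · have hne : ¬ Even j := by rw [Nat.even_iff]; rw [Nat.odd_iff] at hodd; omega
    rw [if_neg hne] at hsplit
    rw [if_pos hodd]
    omega

lemma good_init {j : ℕ} {t : Fin (j+1) → V n} (ht : Good t) : Good (Fin.init t) ∧
    ((∀ i, sympl (Fin.init t i) (t (Fin.last j)) = 1) ∧
     t (Fin.last j) ∉ Submodule.span (ZMod 2) (Set.range (Fin.init t))) := by
  have hsnoc : Fin.snoc (Fin.init t) (t (Fin.last j)) = t := Fin.snoc_init_self t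
  have hli := linearIndependent_fin_snoc.mp (by rw [hsnoc]; exact ht.2)
  refine ⟨⟨?_, hli.1⟩, ?_, hli.2⟩
  · intro i i' hne
    exact ht.1 i.castSucc i'.castSucc (by simpa [Fin.castSucc_inj] using hne)
  · intro i
    exact ht.1 i.castSucc (Fin.last j) (Fin.castSucc_lt_last i).ne

lemma good_snoc {j : ℕ} {u : Fin j → V n} (hu : Good u) {Q : V n}
    (hQ1 : ∀ i, sympl (u i) Q = 1) (hQ2 : Q ∉ Submodule.span (ZMod 2) (Set.range u)) :
    Good (Fin.snoc u Q) := by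
  constructor
  · intro i i' hne
    rcases Fin.eq_castSucc_or_eq_last i with ⟨k, rfl⟩ | rfl <;>
      rcases Fin.eq_castSucc_or_eq_last i' with ⟨k', rfl⟩ | rfl
    · rw [Fin.snoc_castSucc, Fin.snoc_castSucc]
      exact hu.1 k k' (by simpa [Fin.castSucc_inj] using hne)
    · rw [Fin.snoc_castSucc, Fin.snoc_last]
      exact hQ1 k
    · rw [Fin.snoc_last, Fin.snoc_castSucc, sympl_comm]
      exact hQ1 k'
    · exact absurd rfl hne
  · exact linearIndependent_fin_snoc.mpr ⟨hu.2, hQ2⟩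

lemma count_good (j : ℕ) :
    Nat.card {t : Fin j → V n // Good t} = ∏ k ∈ Finset.range j, sN n k := by
  induction j with
  | zero =>
    rw [Finset.range_zero, Finset.prod_empty]
    haveI : Unique {t : Fin 0 → V n // Good t} :=
      ⟨⟨⟨fun i => i.elim0, ⟨fun i => i.elim0, linearIndependent_empty_type⟩⟩⟩,
       fun b => Subtype.ext (funext fun i => i.elim0)⟩
    exact Nat.card_unique
  | succ j ih =>
    classical
    have E : {t : Fin (j+1) → V n // Good t} ≃
        (u : {u : Fin j → V n // Good u}) × {Q : V n // (∀ i, sympl (u.1 i) Q = 1) ∧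
          Q ∉ Submodule.span (ZMod 2) (Set.range u.1)} :=
      { toFun := fun t => ⟨⟨Fin.init t.1, (good_init t.2).1⟩,
          ⟨t.1 (Fin.last j), (good_init t.2).2⟩⟩
        invFun := fun p => ⟨Fin.snoc p.1.1 p.2.1, good_snoc p.1.2 p.2.2.1 p.2.2.2⟩
        left_inv := fun t => Subtype.ext (Fin.snoc_init_self t.1)
        right_inv := fun p => by
          rcases p with ⟨⟨u, hu⟩, ⟨Q, hQ⟩⟩
          have h1 : Fin.init (Fin.snoc u Q : Fin (j+1) → V n) = u := by simp
          refine Sigma.ext (Subtype.ext h1) ?_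
          refine (Subtype.heq_iff_coe_eq (fun x => by simp only [Subtype.coe_mk]; rw [h1])).mpr ?_
          simp }
    rw [Nat.card_congr E]
    have hfib : ∀ u : {u : Fin j → V n // Good u},
        Fintype.card {Q : V n // (∀ i, sympl (u.1 i) Q = 1) ∧
          Q ∉ Submodule.span (ZMod 2) (Set.range u.1)} = sN n j := fun u => by
      rw [← Nat.card_eq_fintype_card]; exact fiber_count u.1 u.2.1 u.2.2
    rw [Nat.card_eq_fintype_card, Fintype.card_sigma]
    rw [Finset.sum_congr rfl (fun u _ => hfib u), Finset.sum_const, Finset.card_univ,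
      smul_eq_mul]
    rw [← Nat.card_eq_fintype_card, ih, Finset.prod_range_succ]

lemma ACt_linearIndependent {j : ℕ} {u : Fin j → V n} (hu : ACt u)
    (W : V n) (hW : ∀ i, sympl (u i) W = 1) :
    LinearIndependent (ZMod 2) u := by
  rw [Fintype.linearIndependent_iff]
  intro g hg i
  have hσ : (∑ i', g i') = 0 := by
    have h0 : sympl W (∑ i', g i' • u i') = 0 := by rw [hg, sympl_zero_right]
    rw [sympl_sum_right] at h0
    have hterm : ∀ i' ∈ Finset.univ, sympl W (g i' • u i') = g i' := fun i' _ => by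
      rw [sympl_comm, sympl_smul_left, hW i', mul_one]
    rw [Finset.sum_congr rfl hterm] at h0
    exact h0
  have h1 : sympl (u i) (∑ i', g i' • u i') = 0 := by rw [hg, sympl_zero_right]
  rw [pair_sum hu g i, hσ, zero_sub] at h1
  have := congrArg Neg.neg h1
  rw [neg_neg, neg_zero] at this
  exact this

/-- tuples with zero sum of length j+1 correspond to good j-tuples, for even j -/
def tupleEquivGood {j : ℕ} (hj : Even j) :
    {t : Fin (j+1) → V n // ACt t ∧ ∑ i, t i = 0} ≃ {u : Fin j → V n // Good u} where
  toFun t := by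
    refine ⟨Fin.init t.1, ?_, ?_⟩
    · intro i i' hne
      exact t.2.1 i.castSucc i'.castSucc (by simpa [Fin.castSucc_inj] using hne)
    · refine ACt_linearIndependent ?_ (t.1 (Fin.last j)) ?_
      · intro i i' hne
        exact t.2.1 i.castSucc i'.castSucc (by simpa [Fin.castSucc_inj] using hne)
      · intro i
        exact t.2.1 i.castSucc (Fin.last j) (Fin.castSucc_lt_last i).ne
  invFun u := by
    refine ⟨Fin.snoc u.1 (∑ i, u.1 i), ?_, ?_⟩
    · have hpair : ∀ k, sympl (u.1 k) (∑ i, u.1 i) = 1 := by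
        intro k
        rw [sympl_sum_univ u.2.1 k]
        have : ((j : ZMod 2)) = 0 := by
          rw [ZMod.natCast_eq_zero_iff]
          obtain ⟨r, hr⟩ := hj; omega
        rw [this]; decide
      intro i i' hne
      rcases Fin.eq_castSucc_or_eq_last i with ⟨k, rfl⟩ | rfl <;>
        rcases Fin.eq_castSucc_or_eq_last i' with ⟨k', rfl⟩ | rfl
      · rw [Fin.snoc_castSucc, Fin.snoc_castSucc]
        exact u.2.1 k k' (by simpa [Fin.castSucc_inj] using hne)
      · rw [Fin.snoc_castSucc, Fin.snoc_last]
        exact hpair k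
      · rw [Fin.snoc_last, Fin.snoc_castSucc, sympl_comm]
        exact hpair k'
      · exact absurd rfl hne
    · rw [Fin.sum_univ_castSucc]
      simp only [Fin.snoc_castSucc, Fin.snoc_last]
      have h20 : (2 : ZMod 2) = 0 := rfl
      rw [← two_smul (ZMod 2) (∑ i, u.1 i), h20, zero_smul]
  left_inv t := by
    apply Subtype.ext
    show Fin.snoc (Fin.init t.1) (∑ i, Fin.init t.1 i) = t.1
    have hlast : ∑ i, Fin.init t.1 i = t.1 (Fin.last j) := by
      have := t.2.2
      rw [Fin.sum_univ_castSucc] at this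
      have h2 : ∀ x : V n, x + x = 0 := by
        intro x
        have h20 : (2 : ZMod 2) = 0 := rfl
        rw [← two_smul (ZMod 2) x, h20, zero_smul]
      calc ∑ i, Fin.init t.1 i
          = ∑ i : Fin j, t.1 i.castSucc + (t.1 (Fin.last j) + t.1 (Fin.last j)) := by
            rw [h2, add_zero]; rfl
        _ = (∑ i : Fin j, t.1 i.castSucc + t.1 (Fin.last j)) + t.1 (Fin.last j) := by ring
        _ = t.1 (Fin.last j) := by rw [this, zero_add]
    rw [hlast]
    exact Fin.snoc_init_self t.1
  right_inv u := by
    apply Subtype.ext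
    simp

open Classical in
noncomputable def toSet {m : ℕ} (hm : 0 < m)
    (t : {t : Fin m → V n // ACt t ∧ ∑ i, t i = 0}) :
    {G : Finset (V n) // MaxAC G ∧ G.card = m} := by
  refine ⟨Finset.image t.1 Finset.univ, ?_, ?_⟩
  · have hinj : Injective t.1 := by
      intro i i' h
      by_contra hne
      have h1 := t.2.1 i i' hne
      rw [h, sympl_self] at h1
      exact absurd h1 (by decide)
    refine maxAC_of_sum_zero ?_ ?_ ?_
    · intro P hP Q hQ hne
      obtain ⟨i, -, rfl⟩ := Finset.mem_image.mp hP
      obtain ⟨i', -, rfl⟩ := Finset.mem_image.mp hQ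
      exact t.2.1 i i' (fun h => hne (by rw [h]))
    · exact Finset.Nonempty.image ⟨⟨0, hm⟩, Finset.mem_univ _⟩ _
    · rw [Finset.sum_image (fun x _ y _ h => hinj h)]
      exact t.2.2
  · have hinj : Injective t.1 := by
      intro i i' h
      by_contra hne
      have h1 := t.2.1 i i' hne
      rw [h, sympl_self] at h1
      exact absurd h1 (by decide)
    rw [Finset.card_image_of_injective _ hinj, Finset.card_univ, Fintype.card_fin]

noncomputable def fiberEquiv {m : ℕ} (hm : 0 < m) (G : {G : Finset (V n) // MaxAC G ∧ G.card = m}) :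
    {t : {t : Fin m → V n // ACt t ∧ ∑ i, t i = 0} // toSet hm t = G} ≃
      (Fin m ≃ {x : V n // x ∈ G.1}) where
  toFun tp := by
    have himg : Finset.image tp.1.1 Finset.univ = G.1 := congrArg Subtype.val tp.2
    refine Equiv.ofBijective (fun i => ⟨tp.1.1 i, by
      rw [← himg]; exact Finset.mem_image_of_mem _ (Finset.mem_univ i)⟩) ⟨?_, ?_⟩
    · intro i i' h
      by_contra hne
      have h1 := tp.1.2.1 i i' hne
      rw [Subtype.mk.injEq] at h
      rw [h, sympl_self] at h1
      exact absurd h1 (by decide)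
    · rintro ⟨x, hx⟩
      rw [← himg] at hx
      obtain ⟨i, -, rfl⟩ := Finset.mem_image.mp hx
      exact ⟨i, rfl⟩
  invFun e := by
    refine ⟨⟨fun i => (e i).1, ?_, ?_⟩, ?_⟩
    · intro i i' hne
      refine G.2.1.1 _ (e i).2 _ (e i').2 ?_
      intro h
      exact hne (e.injective (Subtype.ext h))
    · have h1 : ∑ i, ((e i : {x : V n // x ∈ G.1}) : V n) =
          ∑ x : {x : V n // x ∈ G.1}, (x : V n) := Equiv.sum_comp e _
      rw [h1, Finset.sum_coe_sort G.1 (fun x => x)]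
      exact (maxAC_nonempty_sum_zero G.2.1).2
    · apply Subtype.ext
      show Finset.image _ Finset.univ = G.1
      ext x
      constructor
      · intro hx
        obtain ⟨i, -, rfl⟩ := Finset.mem_image.mp hx
        exact (e i).2
      · intro hx
        refine Finset.mem_image.mpr ⟨e.symm ⟨x, hx⟩, Finset.mem_univ _, ?_⟩
        simp
  left_inv tp := Subtype.ext (Subtype.ext (funext fun i => rfl))
  right_inv e := Equiv.ext fun i => Subtype.ext rfl

lemma card_tuples_eq {m : ℕ} (hm : 0 < m) :
    Nat.card {t : Fin m → V n // ACt t ∧ ∑ i, t i = 0} =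
      Nat.card {G : Finset (V n) // MaxAC G ∧ G.card = m} * m.factorial := by
  classical
  haveI : Fintype {t : Fin m → V n // ACt t ∧ ∑ i, t i = 0} := Fintype.ofFinite _
  haveI : Fintype {G : Finset (V n) // MaxAC G ∧ G.card = m} := Fintype.ofFinite _
  haveI : ∀ G : {G : Finset (V n) // MaxAC G ∧ G.card = m},
      Fintype {t // toSet hm t = G} := fun G => Fintype.ofFinite _
  rw [← Nat.card_congr (Equiv.sigmaFiberEquiv (toSet hm))]
  rw [Nat.card_eq_fintype_card, Fintype.card_sigma]
  have hfib : ∀ G : {G : Finset (V n) // MaxAC G ∧ G.card = m},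
      Fintype.card {t // toSet hm t = G} = m.factorial := fun G => by
    rw [← Nat.card_eq_fintype_card, Nat.card_congr (fiberEquiv hm G),
      Nat.card_eq_fintype_card]
    have hc : Fintype.card {x : V n // x ∈ G.1} = m := by
      rw [Fintype.card_coe, G.2.2]
    rw [Fintype.card_equiv ((Fintype.equivFinOfCardEq hc).symm)]
    simp
  rw [Finset.sum_congr rfl (fun G _ => hfib G), Finset.sum_const, Finset.card_univ,
    smul_eq_mul, Nat.card_eq_fintype_card]

lemma sN_cast {k : ℕ} (hk : k < 2 * n) : (sN n k : ℚ) = s n k := by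
  unfold sN s
  have hpow : (2:ℚ) ^ (2*n - k) = 4 ^ n / 2 ^ k := by
    rw [eq_div_iff (by positivity), ← pow_add]
    have h1 : 2*n - k + k = 2*n := by omega
    rw [h1, show (4:ℚ) = 2^2 by norm_num, ← pow_mul]
  by_cases hodd : Odd k
  · rw [if_pos hodd, if_pos hodd]
    push_cast
    rw [hpow]
  · rw [if_neg hodd, if_neg hodd]
    have h1 : 1 ≤ 2 ^ (2*n - k) := Nat.one_le_two_pow
    rw [Nat.cast_sub h1]
    push_cast
    rw [hpow]

theorem stmt_19 {n : ℕ} (m : ℕ) :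
    (Odd m → m ≤ 2 * n + 1 →
      (Nat.card {G : Finset (V n) // MaxAC G ∧ G.card = m} : ℚ)
        = (∏ k ∈ Finset.range (m - 1), s n k) / (m.factorial : ℚ)) ∧
    (Even m ∨ 2 * n + 1 < m →
      (Nat.card {G : Finset (V n) // MaxAC G ∧ G.card = m} : ℚ) = 0) := by
  constructor
  · intro hodd hle
    have hm0 : m ≠ 0 := by rintro rfl; rw [Nat.odd_iff] at hodd; omega
    obtain ⟨j, rfl⟩ : ∃ j, m = j + 1 := ⟨m - 1, by omega⟩
    have hjeven : Even j := by
      rw [Nat.odd_iff] at hodd; rw [Nat.even_iff]; omega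
    have h1 := card_tuples_eq (n := n) (m := j + 1) (Nat.succ_pos j)
    rw [Nat.card_congr (tupleEquivGood (n := n) hjeven), count_good] at h1
    have hcast : ((∏ k ∈ Finset.range j, sN n k : ℕ) : ℚ) = ∏ k ∈ Finset.range j, s n k := by
      rw [Nat.cast_prod]
      refine Finset.prod_congr rfl fun k hk => ?_
      exact sN_cast (by have := Finset.mem_range.mp hk; omega)
    have hj1 : (j + 1) - 1 = j := rfl
    rw [hj1, eq_div_iff (by
      exact_mod_cast Nat.cast_ne_zero.mpr (Nat.factorial_ne_zero (j+1)))]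
    calc (Nat.card {G : Finset (V n) // MaxAC G ∧ G.card = j + 1} : ℚ) * ((j+1).factorial : ℚ)
        = ((Nat.card {G : Finset (V n) // MaxAC G ∧ G.card = j + 1} * (j+1).factorial : ℕ) : ℚ) := by
          push_cast; ring
      _ = ((∏ k ∈ Finset.range j, sN n k : ℕ) : ℚ) := by rw [← h1]
      _ = ∏ k ∈ Finset.range j, s n k := hcast
  · intro h
    have he : IsEmpty {G : Finset (V n) // MaxAC G ∧ G.card = m} := by
      refine ⟨fun x => ?_⟩
      obtain ⟨G, hG, hcard⟩ := x
      rcases h with he | hgt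
      · have h2 := maxAC_odd hG
        rw [hcard, Nat.odd_iff] at h2
        rw [Nat.even_iff] at he
        omega
      · have h2 := maxAC_card_le hG
        rw [hcard] at h2
        omega
    rw [Nat.card_of_isEmpty]
    exact Nat.cast_zero
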